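/- Let T = ℝ^d/ℤ^d be the real d-dimensional torus and let U ⊆ T be an open subset. Then the collection of closed subgroups of T that do not intersect U has only finitely many maximal elements with respect to inclusion (i.e., the set of maximal elements of {H : H a closed subgroup of T, H ∩ U = ∅} ordered by inclusion is finite). -/

import Mathlib

set_option maxHeartbeats 1000000

open Metric Submodule Module

lemma circle_nss {α : ℝ} (h : ∀ m : ℤ, α ≠ (m : ℝ)) :
    ∃ n : ℕ, ∀ m : ℤ, (1:ℝ)/4 ≤ |(n : ℝ) * α - (m : ℝ)| := by
  set β := α - round α with hβ
  have hβ2 : |β| ≤ 1/2 := by simpa [hβ] using abs_sub_round α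
  have hβ0 : β ≠ 0 := by
    intro h0
    exact h (round α) (by linarith [sub_eq_zero.mp h0])
  have hδ : 0 < |β| := abs_pos.mpr hβ0
  -- reduce to β
  have key : ∀ n : ℕ, (1/4 ≤ (n:ℝ) * |β| ∧ (n:ℝ) * |β| < 3/4) →
      ∀ m : ℤ, (1:ℝ)/4 ≤ |(n : ℝ) * α - (m : ℝ)| := by
    intro n hn m
    have : (n:ℝ) * α - m = (n:ℝ) * β - ((m : ℝ) - n * round α) := by ring
    rw [this]
    have hm : ((m - n * round α : ℤ) : ℝ) = (m:ℝ) - n * round α := by push_cast; ring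
    set k : ℤ := m - n * round α with hk
    rw [← hm]
    have habs : |(n:ℝ) * β| = n * |β| := by
      rw [abs_mul, Nat.abs_cast]
    rcases le_or_gt 1 |(k:ℝ)| with hk1 | hk1
    · have : |(n:ℝ) * β - k| ≥ |(k:ℝ)| - |(n:ℝ)*β| := by
        have := abs_sub_abs_le_abs_sub ((k:ℝ)) ((n:ℝ)*β)
        rw [abs_sub_comm] at this
        linarith
      linarith [hn.1, hn.2]
    · have : (k:ℝ) = 0 := by
        have : |(k:ℝ)| = |k| := by push_cast; ring
        by_contra h0
        have : (1:ℝ) ≤ |(k:ℝ)| := by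
          have : k ≠ 0 := by exact_mod_cast fun hh => h0 (by rw [hh]; norm_num)
          exact_mod_cast Int.one_le_abs (by exact_mod_cast this)
        linarith
      rw [this, sub_zero, habs]
      linarith [hn.1]
  rcases le_or_gt (1/4 : ℝ) |β| with hc | hc
  · exact ⟨1, key 1 (by constructor <;> simp <;> linarith)⟩
  · set n : ℕ := ⌊1/(4*|β|)⌋₊ + 1 with hn
    refine ⟨n, key n ⟨?_, ?_⟩⟩
    · have h1 : (1:ℝ)/(4*|β|) < n := by
        rw [hn]; push_cast
        exact Nat.lt_floor_add_one _
      calc (1:ℝ)/4 = (1/(4*|β|)) * |β| := by field_simp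
        _ ≤ (n:ℝ) * |β| := by nlinarith
    · have h2 : (n:ℝ) ≤ 1/(4*|β|) + 1 := by
        rw [hn]; push_cast
        have := Nat.floor_le (by positivity : (0:ℝ) ≤ 1/(4*|β|))
        linarith
      have : (n:ℝ) * |β| ≤ (1/(4*|β|) + 1) * |β| := by nlinarith
      have h3 : (1/(4*|β|)) * |β| = 1/4 := by field_simp
      nlinarith


noncomputable section

lemma euclidean_rigidity (d : ℕ) (V : AddSubgroup (Fin d → ℝ))
    (hVc : IsClosed (V : Set (Fin d → ℝ)))
    (hVZ : ∀ m : Fin d → ℤ, (fun i => (m i : ℝ)) ∈ V) :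
    ∃ ε > 0, ∀ x : Fin d → ℝ,
      (∀ n : ℕ, Metric.infDist (n • x) (V : Set (Fin d → ℝ)) ≤ ε) → x ∈ V := by
  classical
  -- the maximal linear subspace inside V
  set W : Submodule ℝ (Fin d → ℝ) :=
    { carrier := {v | ∀ t : ℝ, t • v ∈ V}
      add_mem' := by
        intro a b ha hb t
        simpa [smul_add] using V.add_mem (ha t) (hb t)
      zero_mem' := by intro t; simpa using V.zero_mem
      smul_mem' := by
        intro c v hv t
        simpa [smul_smul] using hv (t * c) } with hW
  have hWV : ∀ w ∈ W, w ∈ V := fun w hw => by simpa using hw 1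
  have hWmem : ∀ w : Fin d → ℝ, (∀ t : ℝ, t • w ∈ V) → w ∈ W := fun w hw => hw
  obtain ⟨W', hcompl⟩ := Submodule.exists_isCompl W
  -- the projection onto W' along W
  set p : (Fin d → ℝ) →ₗ[ℝ] ↥W' := Submodule.linearProjOfIsCompl W' W hcompl.symm with hp
  have hproj_sub : ∀ x : Fin d → ℝ, x - ↑(p x) ∈ W := by
    intro x
    have h0 := Submodule.projection_add_projection_eq_self hcompl x
    have h1 : x - ↑(p x) = ↑(W.linearProjOfIsCompl W' hcompl x) :=
      sub_eq_of_eq_add h0.symm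
    rw [h1]
    exact (W.linearProjOfIsCompl W' hcompl x).2
  have hpV : ∀ v ∈ V, ((p v : Fin d → ℝ)) ∈ V := by
    intro v hv
    have h1 : v - ↑(p v) ∈ V := hWV _ (hproj_sub v)
    have h2 : (p v : Fin d → ℝ) = v - (v - ↑(p v)) := by abel
    rw [h2]
    exact V.sub_mem hv h1
  -- the Lipschitz constant of p
  set pc : (Fin d → ℝ) →L[ℝ] ↥W' := LinearMap.toContinuousLinearMap p with hpc
  set C : ℝ := ‖pc‖ + 1 with hC
  have hC0 : 0 < C := by positivity
  have hCle : ∀ x : Fin d → ℝ, ‖p x‖ ≤ C * ‖x‖ := by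
    intro x
    have h1 : ‖pc x‖ ≤ ‖pc‖ * ‖x‖ := pc.le_opNorm x
    have h2 : pc x = p x := by rw [hpc]; simp
    rw [h2] at h1
    nlinarith [norm_nonneg x]
  -- the lattice part
  set D : Submodule ℤ ↥W' :=
    AddSubgroup.toIntSubmodule (AddSubgroup.comap (W'.subtype.toAddMonoidHom) V) with hD
  have hDmem : ∀ u : ↥W', u ∈ D ↔ (u : Fin d → ℝ) ∈ V := fun u => Iff.rfl
  have hpD : ∀ v ∈ V, p v ∈ D := fun v hv => (hDmem _).2 (hpV v hv)
  -- discreteness of D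
  have hdisc : ∃ r > 0, ∀ u : ↥W', u ∈ D → ‖u‖ < r → u = 0 := by
    by_contra hcon
    push_neg at hcon
    have hseq : ∀ k : ℕ, ∃ u : ↥W', u ∈ D ∧ ‖u‖ < 1/(k+1) ∧ u ≠ 0 := by
      intro k
      obtain ⟨u, hu1, hu2, hu3⟩ := hcon (1/(k+1)) (by positivity)
      exact ⟨u, hu1, hu2, hu3⟩
    choose u hu1 hu2 hu3 using hseq
    set e : ℕ → (Fin d → ℝ) := fun k => ‖u k‖⁻¹ • ((u k : Fin d → ℝ)) with he
    have hnorm0 : ∀ k, (0:ℝ) < ‖u k‖ := fun k => norm_pos_iff.2 (hu3 k)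
    have henorm : ∀ k, ‖e k‖ = 1 := by
      intro k
      have h1 : ‖e k‖ = ‖u k‖⁻¹ * ‖((u k : Fin d → ℝ))‖ := by
        rw [he]
        rw [norm_smul, norm_inv, norm_norm]
      rw [h1, ← Submodule.coe_norm, inv_mul_cancel₀ (hnorm0 k).ne']
    have heW' : ∀ k, e k ∈ W' := fun k => W'.smul_mem _ (u k).2
    have hS : IsCompact (sphere (0 : Fin d → ℝ) 1 ∩ W') :=
      (isCompact_sphere 0 1).inter_right (Submodule.closed_of_finiteDimensional W')
    have heS : ∀ k, e k ∈ sphere (0 : Fin d → ℝ) 1 ∩ W' := by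
      intro k
      refine ⟨?_, heW' k⟩
      rw [mem_sphere, dist_zero_right]
      exact henorm k
    obtain ⟨a, haS, φ, hφ, hlim⟩ := hS.tendsto_subseq heS
    have hnorm_tend : Filter.Tendsto (fun k => ‖u (φ k)‖) Filter.atTop (nhds 0) := by
      have hb : ∀ k : ℕ, ‖u (φ k)‖ ≤ 1/((k:ℝ)+1) := by
        intro k
        refine le_trans (hu2 (φ k)).le ?_
        apply one_div_le_one_div_of_le (by positivity)
        have hk : k ≤ φ k := hφ.le_apply
        have := (Nat.cast_le (α := ℝ)).2 hk
        linarith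
      exact squeeze_zero (fun k => (hnorm0 _).le) hb
        tendsto_one_div_add_atTop_nhds_zero_nat
    have helim : Filter.Tendsto (fun k => ‖e (φ k) - a‖) Filter.atTop (nhds 0) :=
      tendsto_iff_norm_sub_tendsto_zero.1 hlim
    have haV : ∀ t : ℝ, 0 ≤ t → t • a ∈ V := by
      intro t ht
      set v : ℕ → (Fin d → ℝ) :=
        fun k => (⌊t / ‖u (φ k)‖⌋₊ : ℕ) • ((u (φ k) : Fin d → ℝ)) with hv
      have hvV : ∀ k, v k ∈ V := fun k =>
        AddSubgroup.nsmul_mem V ((hDmem _).1 (hu1 (φ k))) _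
      have hvlim : Filter.Tendsto v Filter.atTop (nhds (t • a)) := by
        rw [tendsto_iff_norm_sub_tendsto_zero]
        have hbound : ∀ k, ‖v k - t • a‖ ≤ ‖u (φ k)‖ + t * ‖e (φ k) - a‖ := by
          intro k
          have hne := (hnorm0 (φ k)).ne'
          have he2 : e (φ k) = ‖u (φ k)‖⁻¹ • ((u (φ k) : Fin d → ℝ)) := by rw [he]
          have hv2 : v k = ((⌊t / ‖u (φ k)‖⌋₊ : ℝ) * ‖u (φ k)‖) • e (φ k) := by
            rw [he2, smul_smul, mul_assoc, mul_inv_cancel₀ hne, mul_one,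
              Nat.cast_smul_eq_nsmul]
          have h3 : v k - t • a = ((((⌊t / ‖u (φ k)‖⌋₊ : ℝ)) * ‖u (φ k)‖ - t)) • e (φ k)
              + t • (e (φ k) - a) := by
            rw [hv2]; module
          rw [h3]
          have hfl : (⌊t / ‖u (φ k)‖⌋₊ : ℝ) * ‖u (φ k)‖ ≤ t := by
            have h5 : (⌊t / ‖u (φ k)‖⌋₊ : ℝ) ≤ t / ‖u (φ k)‖ :=
              Nat.floor_le (by positivity)
            have := mul_le_mul_of_nonneg_right h5 (hnorm0 (φ k)).le
            rwa [div_mul_cancel₀ _ hne] at this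
          have hfl2 : t - ‖u (φ k)‖ ≤ (⌊t / ‖u (φ k)‖⌋₊ : ℝ) * ‖u (φ k)‖ := by
            have h5 : t / ‖u (φ k)‖ < (⌊t / ‖u (φ k)‖⌋₊ : ℝ) + 1 :=
              Nat.lt_floor_add_one _
            have := mul_le_mul_of_nonneg_right h5.le (hnorm0 (φ k)).le
            rw [div_mul_cancel₀ _ hne, add_mul, one_mul] at this
            linarith
          have h4 : |(⌊t / ‖u (φ k)‖⌋₊ : ℝ) * ‖u (φ k)‖ - t| ≤ ‖u (φ k)‖ := by
            rw [abs_le]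
            constructor <;> linarith [(hnorm0 (φ k)).le]
          have hn1 : ‖(((⌊t / ‖u (φ k)‖⌋₊ : ℝ)) * ‖u (φ k)‖ - t) • e (φ k)‖
              ≤ ‖u (φ k)‖ := by
            rw [norm_smul, henorm (φ k), mul_one, Real.norm_eq_abs]
            exact h4
          have hn2 : ‖t • (e (φ k) - a)‖ = t * ‖e (φ k) - a‖ := by
            rw [norm_smul, Real.norm_eq_abs, abs_of_nonneg ht]
          calc ‖((((⌊t / ‖u (φ k)‖⌋₊ : ℝ)) * ‖u (φ k)‖ - t)) • e (φ k)
              + t • (e (φ k) - a)‖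
              ≤ ‖(((⌊t / ‖u (φ k)‖⌋₊ : ℝ)) * ‖u (φ k)‖ - t) • e (φ k)‖
                + ‖t • (e (φ k) - a)‖ := norm_add_le _ _
            _ ≤ ‖u (φ k)‖ + t * ‖e (φ k) - a‖ := by
                rw [hn2]
                exact add_le_add hn1 le_rfl
        apply squeeze_zero (fun k => norm_nonneg _) hbound
        have := hnorm_tend.add (helim.const_mul t)
        simpa using this
      exact hVc.mem_of_tendsto hvlim (Filter.Eventually.of_forall hvV)
    have haW : a ∈ W := by
      apply hWmem
      intro t
      rcases le_or_gt 0 t with ht | ht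
      · exact haV t ht
      · have h6 : t • a = -((-t) • a) := by module
        rw [h6]
        exact V.neg_mem (haV (-t) (by linarith))
    have haW' : a ∈ W' := haS.2
    have ha0 : a = 0 :=
      (Submodule.mem_bot ℝ).1
        (hcompl.disjoint.le_bot (Submodule.mem_inf.2 ⟨haW, haW'⟩))
    have ha1 : ‖a‖ = 1 := by
      have := haS.1
      rwa [mem_sphere_iff_norm, sub_zero] at this
    rw [ha0] at ha1
    simp at ha1
  -- D is discrete
  haveI hDdisc : DiscreteTopology ↥D := by
    obtain ⟨r, hr0, hr⟩ := hdisc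
    rw [discreteTopology_iff_isOpen_singleton_zero]
    have hset : {(0 : ↥D)} = (Subtype.val : ↥D → ↥W') ⁻¹' (Metric.ball (0:↥W') r) := by
      ext z
      simp only [Set.mem_singleton_iff, Set.mem_preimage, Metric.mem_ball, dist_zero_right]
      constructor
      · rintro rfl; simpa using hr0
      · intro hz
        exact Subtype.ext (hr z.1 z.2 hz)
    rw [hset]
    exact Metric.isOpen_ball.preimage continuous_subtype_val
  -- D spans W'
  have hVP : ∀ v ∈ V, v ∈ W ⊔ Submodule.span ℝ (W'.subtype '' (D : Set ↥W')) := by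
    intro v hv
    have h1 : v = (v - ↑(p v)) + ↑(p v) := by abel
    rw [h1]
    refine Submodule.add_mem _ (Submodule.mem_sup_left (hproj_sub v)) ?_
    refine Submodule.mem_sup_right (Submodule.subset_span ?_)
    exact ⟨p v, hpD v hv, rfl⟩
  have hPtop : W ⊔ Submodule.span ℝ (W'.subtype '' (D : Set ↥W')) = ⊤ := by
    by_contra hne
    have hex : ∃ x, x ∉ W ⊔ Submodule.span ℝ (W'.subtype '' (D : Set ↥W')) := by
      by_contra hall
      push_neg at hall
      exact hne (Submodule.eq_top_iff'.2 hall)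
    obtain ⟨x, hx⟩ := hex
    set P := W ⊔ Submodule.span ℝ (W'.subtype '' (D : Set ↥W')) with hP
    -- build a nonzero continuous functional vanishing on V
    have hmkx : P.mkQ x ≠ 0 := by
      rw [Submodule.mkQ_apply, Ne, Submodule.Quotient.mk_eq_zero]
      exact hx
    set B := Module.Free.chooseBasis ℝ ((Fin d → ℝ) ⧸ P) with hB
    have hrepr : B.repr (P.mkQ x) ≠ 0 := fun h0 => hmkx (by
      have := congrArg B.repr.symm h0
      simpa using this)
    have hexj : ∃ j, B.repr (P.mkQ x) j ≠ 0 := by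
      by_contra hall
      push_neg at hall
      exact hrepr (Finsupp.ext hall)
    obtain ⟨j, hj⟩ := hexj
    set g : ((Fin d → ℝ) ⧸ P) →ₗ[ℝ] ℝ := B.coord j with hg
    set f : (Fin d → ℝ) →L[ℝ] ℝ := LinearMap.toContinuousLinearMap (g ∘ₗ P.mkQ) with hf
    have hfV : ∀ v ∈ V, f v = 0 := by
      intro v hv
      have h1 : P.mkQ v = 0 := by
        rw [Submodule.mkQ_apply, Submodule.Quotient.mk_eq_zero]
        exact hVP v hv
      have : f v = g (P.mkQ v) := rfl
      rw [this, h1, map_zero]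
    have hfx : f x ≠ 0 := by
      have : f x = B.repr (P.mkQ x) j := rfl
      rw [this]
      exact hj
    -- bounded on the fundamental cube, hence bounded, hence zero
    have hQc : IsCompact (Set.pi Set.univ (fun _ : Fin d => Set.Icc (0:ℝ) 1)) :=
      isCompact_univ_pi (fun _ => isCompact_Icc)
    obtain ⟨M, hM⟩ := hQc.exists_bound_of_continuousOn f.continuous.continuousOn
    have hfb : ∀ y : Fin d → ℝ, ‖f y‖ ≤ M := by
      intro y
      set v : Fin d → ℝ := fun i => ((⌊y i⌋ : ℤ) : ℝ) with hv
      have hvV : v ∈ V := hVZ (fun i => ⌊y i⌋)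
      have hyv : y - v ∈ Set.pi Set.univ (fun _ : Fin d => Set.Icc (0:ℝ) 1) := by
        intro i _
        constructor
        · simp only [Pi.sub_apply, hv]
          linarith [Int.floor_le (y i)]
        · simp only [Pi.sub_apply, hv]
          linarith [Int.lt_floor_add_one (y i)]
      have h2 : f y = f (y - v) := by
        rw [map_sub, hfV v hvV, sub_zero]
      rw [h2]
      exact hM _ hyv
    have : ‖f (((M+1)/(f x)) • x)‖ ≤ M := hfb _
    rw [map_smul] at this
    have hM0 : (0:ℝ) ≤ M := le_trans (norm_nonneg _) (hfb 0)
    rw [smul_eq_mul, Real.norm_eq_abs, abs_mul, abs_div,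
      div_mul_cancel₀ _ (abs_ne_zero.2 hfx),
      abs_of_nonneg (by linarith : (0:ℝ) ≤ M+1)] at this
    linarith
  have hspan : Submodule.span ℝ (D : Set ↥W') = ⊤ := by
    rw [eq_top_iff]
    rintro z -
    have hz : (z : Fin d → ℝ) ∈ W ⊔ Submodule.span ℝ (W'.subtype '' (D : Set ↥W')) := by
      rw [hPtop]; trivial
    rw [Submodule.mem_sup] at hz
    obtain ⟨w, hw, s, hs, hsum⟩ := hz
    rw [Submodule.span_image, Submodule.mem_map] at hs
    obtain ⟨s', hs', rfl⟩ := hs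
    have hzw : ((z - s' : ↥W') : Fin d → ℝ) ∈ W := by
      have h1 : ((z - s' : ↥W') : Fin d → ℝ) = w := by
        have hs'' : W'.subtype s' = (s' : Fin d → ℝ) := rfl
        rw [Submodule.coe_sub, ← hsum, hs'']
        abel
      rw [h1]
      exact hw
    have h0 : z - s' = 0 := by
      have := (Submodule.mem_bot ℝ).1
        (hcompl.disjoint.le_bot (Submodule.mem_inf.2 ⟨hzw, (z - s').2⟩))
      exact Subtype.ext (by simpa using this)
    have : z = s' := by
      have := sub_eq_zero.1 h0
      exact this
    rw [this]
    exact hs'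
  haveI : IsZLattice ℝ D := ⟨hspan⟩
  haveI : Module.Free ℤ ↥D := ZLattice.module_free ℝ D
  haveI : Module.Finite ℤ ↥D := ZLattice.module_finite ℝ D
  set b := Module.Free.chooseBasis ℤ ↥D with hb
  set c := Basis.ofZLatticeBasis ℝ D b with hc
  -- coordinate bound
  have hcoord : ∃ C₂ > 0, ∀ (i : Module.Free.ChooseBasisIndex ℤ ↥D) (y : ↥W'),
      |c.repr y i| ≤ C₂ * ‖y‖ := by
    set C₂ : ℝ := 1 + ∑ i, ‖LinearMap.toContinuousLinearMap (c.coord i)‖ with hC₂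
    have hsum_nonneg : ∀ i, (0:ℝ) ≤ ‖LinearMap.toContinuousLinearMap (c.coord i)‖ :=
      fun i => ContinuousLinearMap.opNorm_nonneg _
    refine ⟨C₂, by positivity, ?_⟩
    intro i y
    have h1 : |c.repr y i| = ‖LinearMap.toContinuousLinearMap (c.coord i) y‖ := by
      simp [Real.norm_eq_abs, LinearMap.coe_toContinuousLinearMap', Basis.coord_apply]
    rw [h1]
    refine le_trans ((LinearMap.toContinuousLinearMap (c.coord i)).le_opNorm y) ?_
    have h2 : ‖LinearMap.toContinuousLinearMap (c.coord i)‖ ≤ C₂ := by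
      rw [hC₂]
      have := Finset.single_le_sum (f := fun i =>
        ‖LinearMap.toContinuousLinearMap (c.coord i)‖)
        (fun i _ => hsum_nonneg i) (Finset.mem_univ i)
      linarith
    exact mul_le_mul_of_nonneg_right h2 (norm_nonneg y)
  obtain ⟨C₂, hC₂0, hC₂⟩ := hcoord
  -- integrality of coordinates of lattice points
  have hint : ∀ z : ↥W', z ∈ D → ∀ i, ∃ m : ℤ, c.repr z i = (m:ℝ) := by
    intro z hz i
    refine ⟨b.repr ⟨z, hz⟩ i, ?_⟩
    have h0 := Basis.ofZLatticeBasis_repr_apply ℝ D b ⟨z, hz⟩ i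
    exact_mod_cast h0
  -- membership from integer coordinates
  have hmem_of_int : ∀ y : ↥W', (∀ i, ∃ m : ℤ, c.repr y i = (m:ℝ)) → y ∈ D := by
    intro y hy
    choose m hm using hy
    have h1 : y = ∑ i, (c.repr y i) • c i := (c.sum_repr y).symm
    rw [h1]
    refine Submodule.sum_mem D ?_
    intro i _
    rw [hm i]
    have h2 : ((m i : ℝ)) • c i = (m i) • c i := Int.cast_smul_eq_zsmul ℝ (m i) (c i)
    rw [h2]
    have h3 : c i = ((b i : ↥D) : ↥W') := by rw [hc]; exact Basis.ofZLatticeBasis_apply ℝ D b i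
    have h4 : c i ∈ D := h3 ▸ SetLike.coe_mem (b i)
    exact Submodule.smul_mem D (m i) h4
  -- no small subgroups for the quotient lattice
  have hNSS : ∀ y : ↥W',
      (∀ n : ℕ, Metric.infDist (n • y) ((D : Set ↥W')) ≤ 1/(8*C₂)) → y ∈ D := by
    intro y hy
    by_cases hall : ∀ i, ∃ m : ℤ, c.repr y i = (m:ℝ)
    · exact hmem_of_int y hall
    · exfalso
      push_neg at hall
      obtain ⟨j, hj⟩ := hall
      have hj' : ∀ m : ℤ, c.repr y j ≠ (m:ℝ) := fun m => hj m
      obtain ⟨n, hn⟩ := circle_nss hj'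
      have h1 : Metric.infDist (n • y) ((D : Set ↥W')) < 1/(4*C₂) := by
        refine lt_of_le_of_lt (hy n) ?_
        rw [div_lt_div_iff₀ (by positivity) (by positivity)]
        nlinarith
      have hDne : ((D : Set ↥W')).Nonempty := ⟨0, Submodule.zero_mem D⟩
      obtain ⟨z, hzD, hdz⟩ := (Metric.infDist_lt_iff hDne).1 h1
      obtain ⟨mz, hmz⟩ := hint z hzD j
      have h2 : |c.repr (n • y - z) j| ≤ C₂ * ‖n • y - z‖ := hC₂ j _
      have h3 : c.repr (n • y - z) j = (n:ℝ) * c.repr y j - (mz:ℝ) := by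
        rw [map_sub, map_nsmul]
        simp only [Finsupp.coe_sub, Pi.sub_apply, Finsupp.coe_smul]
        rw [Pi.smul_apply, nsmul_eq_mul, hmz]
      have h4 : ‖n • y - z‖ = dist (n • y) z := (dist_eq_norm _ _).symm
      have h5 : (1:ℝ)/4 ≤ |c.repr (n • y - z) j| := by
        rw [h3]
        exact hn mz
      rw [h4] at h2
      have h6 : C₂ * dist (n • y) z < C₂ * (1/(4*C₂)) :=
        mul_lt_mul_of_pos_left hdz hC₂0
      have h7 : C₂ * (1/(4*C₂)) = 1/4 := by
        field_simp
      rw [h7] at h6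
      linarith [le_trans h5 h2]
  -- conclusion
  refine ⟨(1/(8*C₂))/(2*C), by positivity, ?_⟩
  intro x hx
  have hpx : p x ∈ D := by
    apply hNSS
    intro n
    have h1 : Metric.infDist (n • x) (V : Set (Fin d → ℝ)) < 2*((1/(8*C₂))/(2*C)) := by
      refine lt_of_le_of_lt (hx n) ?_
      have h0 : (0:ℝ) < (1/(8*C₂))/(2*C) := by positivity
      linarith
    obtain ⟨v, hv, hdist⟩ := (Metric.infDist_lt_iff ⟨0, V.zero_mem⟩).1 h1
    have h2 : dist (n • p x) (p v) ≤ C * dist (n • x) v := by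
      rw [dist_eq_norm, dist_eq_norm]
      have h3 : n • p x - p v = p (n • x - v) := by rw [map_sub, map_nsmul]
      rw [h3]
      exact hCle _
    have h4 : Metric.infDist (n • p x) ((D : Set ↥W')) ≤ dist (n • p x) (p v) :=
      Metric.infDist_le_dist_of_mem (hpD v hv)
    have h5 : C * dist (n • x) v < C * (2*((1/(8*C₂))/(2*C))) :=
      mul_lt_mul_of_pos_left hdist hC0
    have h6 : C * (2*((1/(8*C₂))/(2*C))) = 1/(8*C₂) := by
      field_simp
    calc Metric.infDist (n • p x) ((D : Set ↥W')) ≤ C * dist (n • x) v :=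
        le_trans h4 h2
      _ ≤ 1/(8*C₂) := by rw [← h6]; exact h5.le
  have h7 : x - ↑(p x) ∈ V := hWV _ (hproj_sub x)
  have h8 : x = (x - ↑(p x)) + ↑(p x) := by abel
  rw [h8]
  exact V.add_mem h7 ((hDmem _).1 hpx)

/-- The canonical projection from `ℝ^d` to the torus. -/
noncomputable def torusMk (d : ℕ) : (Fin d → ℝ) →+ (Fin d → AddCircle (1:ℝ)) where
  toFun x := fun i => (x i : AddCircle (1:ℝ))
  map_zero' := by funext i; simp
  map_add' x y := by funext i; simp [Pi.add_apply]

lemma torusMk_continuous (d : ℕ) : Continuous (torusMk d) :=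
  continuous_pi fun i => (AddCircle.continuous_mk' 1).comp (continuous_apply i)

lemma torusMk_surjective (d : ℕ) : Function.Surjective (torusMk d) := by
  intro t
  have h : ∀ i, ∃ r : ℝ, (r : AddCircle (1:ℝ)) = t i := fun i => by
    obtain ⟨r, hr⟩ := Quotient.exists_rep (t i)
    exact ⟨r, hr⟩
  choose x hx using h
  exact ⟨x, funext hx⟩

lemma addCircle_norm_eq (r : ℝ) : ‖((r : ℝ) : AddCircle (1:ℝ))‖ = |r - round r| := by
  rw [AddCircle.norm_eq]
  simp

lemma torus_rigidity (d : ℕ) (L : AddSubgroup (Fin d → AddCircle (1:ℝ)))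
    (hL : IsClosed (L : Set (Fin d → AddCircle (1:ℝ)))) :
    ∃ ε > 0, ∀ K : AddSubgroup (Fin d → AddCircle (1:ℝ)),
      (∀ x ∈ K, Metric.infDist x (L : Set (Fin d → AddCircle (1:ℝ))) ≤ ε) → K ≤ L := by
  haveI : Fact ((0:ℝ) < 1) := ⟨one_pos⟩
  set π := torusMk d with hπ
  set V : AddSubgroup (Fin d → ℝ) := AddSubgroup.comap π L with hV
  have hVmem : ∀ x : Fin d → ℝ, x ∈ V ↔ π x ∈ L := fun x => AddSubgroup.mem_comap
  have hVc : IsClosed (V : Set (Fin d → ℝ)) := by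
    have : (V : Set (Fin d → ℝ)) = ⇑π ⁻¹' (L : Set (Fin d → AddCircle (1:ℝ))) := rfl
    rw [this]
    exact hL.preimage (torusMk_continuous d)
  have hint : ∀ m : Fin d → ℤ, π (fun i => (m i : ℝ)) = 0 := by
    intro m
    funext i
    show ((m i : ℝ) : AddCircle (1:ℝ)) = 0
    rw [AddCircle.coe_eq_zero_iff]
    exact ⟨m i, by simp⟩
  have hVZ : ∀ m : Fin d → ℤ, (fun i => (m i : ℝ)) ∈ V := by
    intro m
    rw [hVmem, hint m]
    exact L.zero_mem
  have hLne : (L : Set (Fin d → AddCircle (1:ℝ))).Nonempty := ⟨0, L.zero_mem⟩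
  have hbridge : ∀ x : Fin d → ℝ,
      Metric.infDist x (V : Set (Fin d → ℝ))
        ≤ Metric.infDist (π x) (L : Set (Fin d → AddCircle (1:ℝ))) := by
    intro x
    have hLcpt : IsCompact (L : Set (Fin d → AddCircle (1:ℝ))) := hL.isCompact
    obtain ⟨l, hl, hdl⟩ := hLcpt.exists_infDist_eq_dist hLne (π x)
    obtain ⟨w, hw⟩ := torusMk_surjective d l
    have hwV : w ∈ V := by rw [hVmem, hw]; exact hl
    set mv : Fin d → ℝ := fun i => ((round ((x - w) i) : ℤ) : ℝ) with hmv
    have hmvV : mv ∈ V := hVZ (fun i => round ((x - w) i))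
    set v : Fin d → ℝ := w + mv with hv
    have hvV : v ∈ V := V.add_mem hwV hmvV
    have hdist : dist x v ≤ dist (π x) l := by
      rw [dist_eq_norm, dist_eq_norm]
      refine (pi_norm_le_iff_of_nonneg (norm_nonneg _)).2 ?_
      intro i
      have h1 : (π x - l) i = (((x - w) i : ℝ) : AddCircle (1:ℝ)) := by
        rw [← hw, ← map_sub]
        rfl
      have h2 : ‖(π x - l) i‖ ≤ ‖π x - l‖ := norm_le_pi_norm (π x - l) i
      rw [h1, addCircle_norm_eq] at h2
      have h3 : (x - v) i = (x - w) i - ((round ((x - w) i) : ℤ) : ℝ) := by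
        rw [hv]
        simp [hmv]
        ring
      rw [h3, Real.norm_eq_abs]
      exact h2
    calc Metric.infDist x (V : Set (Fin d → ℝ)) ≤ dist x v :=
        Metric.infDist_le_dist_of_mem hvV
      _ ≤ dist (π x) l := hdist
      _ = Metric.infDist (π x) (L : Set (Fin d → AddCircle (1:ℝ))) := hdl.symm
  obtain ⟨ε, hε0, hrig⟩ := euclidean_rigidity d V hVc hVZ
  refine ⟨ε, hε0, ?_⟩
  intro K hK x hx
  obtain ⟨y, hy⟩ := torusMk_surjective d x
  have hyV : y ∈ V := by
    refine hrig y ?_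
    intro n
    refine le_trans (hbridge (n • y)) ?_
    rw [map_nsmul, hy]
    exact hK _ (AddSubgroup.nsmul_mem K hx n)
  rw [← hy]
  exact (hVmem y).1 hyV

/-- Lawrence: in the real torus `T = ℝ^d/ℤ^d` (modelled as
`Fin d → ℝ/ℤ`, i.e. `Fin d → AddCircle 1`), for every open subset `U`,
the collection of closed subgroups of `T` disjoint from `U` has only finitely
many maximal elements with respect to inclusion. -/
theorem toric_mld_stmt4 (d : ℕ) (U : Set (Fin d → AddCircle (1:ℝ)))
    (hU : IsOpen U) :
    {H : AddSubgroup (Fin d → AddCircle (1:ℝ)) |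
      (IsClosed (H : Set (Fin d → AddCircle (1:ℝ))) ∧
        (H : Set (Fin d → AddCircle (1:ℝ))) ∩ U = ∅) ∧
      ∀ H' : AddSubgroup (Fin d → AddCircle (1:ℝ)),
        (IsClosed (H' : Set (Fin d → AddCircle (1:ℝ))) ∧
          (H' : Set (Fin d → AddCircle (1:ℝ))) ∩ U = ∅) →
        H ≤ H' → H = H'}.Finite := by
  classical
  haveI : Fact ((0:ℝ) < 1) := ⟨one_pos⟩
  by_contra hinf
  have hinf' : Set.Infinite {H : AddSubgroup (Fin d → AddCircle (1:ℝ)) |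
      (IsClosed (H : Set (Fin d → AddCircle (1:ℝ))) ∧
        (H : Set (Fin d → AddCircle (1:ℝ))) ∩ U = ∅) ∧
      ∀ H' : AddSubgroup (Fin d → AddCircle (1:ℝ)),
        (IsClosed (H' : Set (Fin d → AddCircle (1:ℝ))) ∧
          (H' : Set (Fin d → AddCircle (1:ℝ))) ∩ U = ∅) →
        H ≤ H' → H = H'} := hinf
  set emb := hinf'.natEmbedding with hemb
  have hH : ∀ k : ℕ, ((emb k : AddSubgroup (Fin d → AddCircle (1:ℝ))) : Set _) ∩ U = ∅ :=
    fun k => (emb k).2.1.2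
  have hHc : ∀ k : ℕ, IsClosed ((emb k : AddSubgroup (Fin d → AddCircle (1:ℝ))) : Set (Fin d → AddCircle (1:ℝ))) :=
    fun k => (emb k).2.1.1
  have hHmax : ∀ k : ℕ, ∀ H' : AddSubgroup (Fin d → AddCircle (1:ℝ)),
      (IsClosed (H' : Set (Fin d → AddCircle (1:ℝ))) ∧
        (H' : Set (Fin d → AddCircle (1:ℝ))) ∩ U = ∅) →
      (emb k : AddSubgroup (Fin d → AddCircle (1:ℝ))) ≤ H' →
      (emb k : AddSubgroup (Fin d → AddCircle (1:ℝ))) = H' :=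
    fun k => (emb k).2.2
  set F : ℕ → TopologicalSpace.NonemptyCompacts (Fin d → AddCircle (1:ℝ)) :=
    fun k => ⟨⟨((emb k : AddSubgroup (Fin d → AddCircle (1:ℝ))) : Set _),
      (hHc k).isCompact⟩, ⟨0, AddSubgroup.zero_mem _⟩⟩ with hF
  have hFset : ∀ k, (F k : Set (Fin d → AddCircle (1:ℝ)))
      = ((emb k : AddSubgroup (Fin d → AddCircle (1:ℝ))) : Set _) := fun k => rfl
  obtain ⟨L₀, -, φ, hφ, hlim⟩ := isCompact_univ.tendsto_subseq (fun k => Set.mem_univ (F k))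
  have hlim' : ∀ ε > 0, ∃ N, ∀ k ≥ N, dist (F (φ k)) L₀ < ε := Metric.tendsto_atTop.1 hlim
  set Z : Set (Fin d → AddCircle (1:ℝ)) := (L₀ : Set (Fin d → AddCircle (1:ℝ))) with hZ
  have hZc : IsClosed Z := L₀.isCompact.isClosed
  have hZne : Z.Nonempty := L₀.nonempty
  have hedist1 : ∀ k, EMetric.hausdorffEdist (F (φ k) : Set (Fin d → AddCircle (1:ℝ))) Z ≠ ⊤ :=
    fun k => Metric.hausdorffEdist_ne_top_of_nonempty_of_bounded (F (φ k)).nonempty hZne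
      (F (φ k)).isCompact.isBounded L₀.isCompact.isBounded
  have hedist2 : ∀ k, EMetric.hausdorffEdist Z (F (φ k) : Set (Fin d → AddCircle (1:ℝ))) ≠ ⊤ :=
    fun k => by rw [EMetric.hausdorffEdist, hausdorffEDist_comm]; exact hedist1 k
  have hdist_eq : ∀ k, dist (F (φ k)) L₀
      = Metric.hausdorffDist (F (φ k) : Set (Fin d → AddCircle (1:ℝ))) Z :=
    fun k => Metric.NonemptyCompacts.dist_eq
  -- points of Z are approximated by points of the subgroups
  have happrox : ∀ t ∈ Z, ∀ k, ∀ δ > 0, ∃ s ∈ (F (φ k) : Set (Fin d → AddCircle (1:ℝ))),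
      dist t s < dist (F (φ k)) L₀ + δ := by
    intro t ht k δ hδ
    have h1 : Metric.infDist t (F (φ k) : Set (Fin d → AddCircle (1:ℝ)))
        ≤ dist (F (φ k)) L₀ := by
      rw [hdist_eq, Metric.hausdorffDist_comm]
      exact Metric.infDist_le_hausdorffDist_of_mem ht (hedist2 k)
    have h2 : Metric.infDist t (F (φ k) : Set (Fin d → AddCircle (1:ℝ)))
        < dist (F (φ k)) L₀ + δ := lt_of_le_of_lt h1 (by linarith)
    exact (Metric.infDist_lt_iff (F (φ k)).nonempty).1 h2
  -- the infDist to Z is controlled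
  have hinfZ : ∀ t : Fin d → AddCircle (1:ℝ), ∀ k,
      Metric.infDist t Z ≤ Metric.infDist t (F (φ k) : Set (Fin d → AddCircle (1:ℝ)))
        + dist (F (φ k)) L₀ := by
    intro t k
    rw [hdist_eq]
    exact Metric.infDist_le_infDist_add_hausdorffDist (hedist1 k)
  have hmemZ : ∀ t : Fin d → AddCircle (1:ℝ), (∀ ε > 0, Metric.infDist t Z ≤ ε) → t ∈ Z := by
    intro t ht
    rw [hZc.mem_iff_infDist_zero hZne]
    have h1 : Metric.infDist t Z ≤ 0 := le_of_forall_pos_le_add (by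
      intro ε hε
      simpa using ht ε hε)
    exact le_antisymm h1 Metric.infDist_nonneg
  -- Z is a subgroup
  have hZzero : (0 : Fin d → AddCircle (1:ℝ)) ∈ Z := by
    apply hmemZ
    intro ε hε
    obtain ⟨N, hN⟩ := hlim' (ε/2) (by linarith)
    have h1 : Metric.infDist (0 : Fin d → AddCircle (1:ℝ))
        (F (φ N) : Set (Fin d → AddCircle (1:ℝ))) = 0 :=
      Metric.infDist_zero_of_mem (AddSubgroup.zero_mem _)
    have := hinfZ 0 N
    rw [h1] at this
    linarith [hN N le_rfl]
  have hZsub : ∀ a ∈ Z, ∀ b ∈ Z, a - b ∈ Z := by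
    intro a ha b hb
    apply hmemZ
    intro ε hε
    obtain ⟨N, hN⟩ := hlim' (ε/8) (by linarith)
    obtain ⟨a', ha', hda⟩ := happrox a ha N (ε/8) (by linarith)
    obtain ⟨b', hb', hdb⟩ := happrox b hb N (ε/8) (by linarith)
    have hab' : a' - b' ∈ (F (φ N) : Set (Fin d → AddCircle (1:ℝ))) :=
      AddSubgroup.sub_mem _ ha' hb'
    have h1 : Metric.infDist (a - b) (F (φ N) : Set (Fin d → AddCircle (1:ℝ)))
        ≤ dist (a - b) (a' - b') := Metric.infDist_le_dist_of_mem hab'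
    have h2 : dist (a - b) (a' - b') ≤ dist a a' + dist b b' := dist_sub_sub_le _ _ _ _
    have h3 := hinfZ (a - b) N
    have h4 := hN N le_rfl
    linarith
  set Lgrp : AddSubgroup (Fin d → AddCircle (1:ℝ)) :=
    { carrier := Z
      zero_mem' := hZzero
      add_mem' := by
        intro a b ha hb
        have h1 : (0:Fin d → AddCircle (1:ℝ)) - b ∈ Z := hZsub 0 hZzero b hb
        have h2 : a - (0 - b) ∈ Z := hZsub a ha _ h1
        simpa using h2
      neg_mem' := by
        intro a ha
        have h1 : (0:Fin d → AddCircle (1:ℝ)) - a ∈ Z := hZsub 0 hZzero a ha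
        simpa using h1 } with hLgrp
  have hLgrpc : IsClosed ((Lgrp : AddSubgroup (Fin d → AddCircle (1:ℝ))) :
      Set (Fin d → AddCircle (1:ℝ))) := hZc
  -- Z is disjoint from U
  have hZU : Z ∩ U = ∅ := by
    have hUc : ∀ k, (F (φ k) : Set (Fin d → AddCircle (1:ℝ))) ⊆ Uᶜ := by
      intro k t ht htU
      have := hH (φ k)
      rw [Set.eq_empty_iff_forall_notMem] at this
      exact this t ⟨ht, htU⟩
    have hUcne : (Uᶜ : Set (Fin d → AddCircle (1:ℝ))).Nonempty :=
      ⟨0, hUc 0 (AddSubgroup.zero_mem _)⟩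
    have hmemUc : ∀ t ∈ Z, t ∈ (Uᶜ : Set (Fin d → AddCircle (1:ℝ))) := by
      intro t ht
      rw [(hU.isClosed_compl).mem_iff_infDist_zero hUcne]
      have h1 : ∀ ε > 0, Metric.infDist t (Uᶜ : Set (Fin d → AddCircle (1:ℝ))) ≤ ε := by
        intro ε hε
        obtain ⟨N, hN⟩ := hlim' (ε/2) (by linarith)
        obtain ⟨s, hs, hds⟩ := happrox t ht N (ε/4) (by linarith)
        have h2 : Metric.infDist t (Uᶜ : Set (Fin d → AddCircle (1:ℝ))) ≤ dist t s :=
          Metric.infDist_le_dist_of_mem (hUc N hs)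
        have h3 := hN N le_rfl
        linarith
      have h4 : Metric.infDist t (Uᶜ : Set (Fin d → AddCircle (1:ℝ))) ≤ 0 :=
        le_of_forall_pos_le_add (by intro ε hε; simpa using h1 ε hε)
      exact le_antisymm h4 Metric.infDist_nonneg
    rw [Set.eq_empty_iff_forall_notMem]
    rintro t ⟨htZ, htU⟩
    exact hmemUc t htZ htU
  -- apply rigidity
  obtain ⟨ε, hε0, hrig⟩ := torus_rigidity d Lgrp hLgrpc
  obtain ⟨N, hN⟩ := hlim' ε hε0
  have hsub : ∀ k, N ≤ k → (emb (φ k) : AddSubgroup (Fin d → AddCircle (1:ℝ))) ≤ Lgrp := by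
    intro k hk
    apply hrig
    intro x hx
    have h1 : Metric.infDist x Z ≤ dist (F (φ k)) L₀ := by
      rw [hdist_eq]
      exact Metric.infDist_le_hausdorffDist_of_mem (by exact hx) (hedist1 k)
    exact le_trans h1 (hN k hk).le
  have e1 : (emb (φ N) : AddSubgroup (Fin d → AddCircle (1:ℝ))) = Lgrp :=
    hHmax (φ N) Lgrp ⟨hLgrpc, hZU⟩ (hsub N le_rfl)
  have e2 : (emb (φ (N+1)) : AddSubgroup (Fin d → AddCircle (1:ℝ))) = Lgrp :=
    hHmax (φ (N+1)) Lgrp ⟨hLgrpc, hZU⟩ (hsub (N+1) (Nat.le_succ N))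
  have e3 : emb (φ N) = emb (φ (N+1)) := Subtype.ext (e1.trans e2.symm)
  have e4 : φ N = φ (N+1) := emb.injective e3
  exact absurd e4 (hφ (Nat.lt_succ_self N)).ne
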